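/- Let ξ, ξ̃ : [0,∞) → ℝ be continuous with ξ(0) = ξ̃(0) = 0. Suppose there is c > 0 with ∫₁ʳ (1 − ξ(s))/s ds ≤ c for all r ≥ 1, and suppose limsup_{r→∞} ξ̃(r) < 1. Define h(r) = exp(-∫₀ʳ ξ/s ds) and h̃(r) = h̃(0)·exp(-∫₀ʳ ξ̃/s ds). Then h(r)/h̃(r) → 0 as r → ∞; consequently there is no α > 0 with h(r) ≥ α·h̃(r) for all r. -/

import Mathlib

open MeasureTheory intervalIntegral Filter

/-- a cigar-type profile cannot dominate a profile whose generating
function stays bounded away from `1` at infinity. -/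
theorem stmt_7 (ξ ξ' : ℝ → ℝ) (hξc : Continuous ξ) (hξ'c : Continuous ξ')
    (hξ0 : ξ 0 = 0) (hξ'0 : ξ' 0 = 0)
    (hint : ∀ r > (0:ℝ), IntervalIntegrable (fun s => ξ s / s) volume 0 r)
    (hint' : ∀ r > (0:ℝ), IntervalIntegrable (fun s => ξ' s / s) volume 0 r)
    (c : ℝ) (hc : 0 < c)
    (hcigar : ∀ r : ℝ, 1 ≤ r → (∫ s in (1:ℝ)..r, (1 - ξ s) / s) ≤ c)
    (hlimsup : ∃ b : ℝ, b < 1 ∧ ∀ᶠ r in atTop, ξ' r ≤ b)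
    (h h' : ℝ → ℝ) (hpos' : 0 < h' 0)
    (hh : ∀ r, h r = Real.exp (-∫ s in (0:ℝ)..r, ξ s / s))
    (hh' : ∀ r, h' r = h' 0 * Real.exp (-∫ s in (0:ℝ)..r, ξ' s / s)) :
    Tendsto (fun r => h r / h' r) atTop (nhds 0) ∧
      ¬∃ α : ℝ, 0 < α ∧ ∀ r : ℝ, 0 ≤ r → α * h' r ≤ h r := by
  obtain ⟨b, hb1, hev⟩ := hlimsup
  rw [eventually_atTop] at hev
  obtain ⟨R₀, hR₀⟩ := hev
  set R : ℝ := max R₀ 1 with hRdef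
  have hR1 : (1:ℝ) ≤ R := le_max_right _ _
  have hRb : ∀ s, R ≤ s → ξ' s ≤ b := fun s hs => hR₀ s (le_trans (le_max_left _ _) hs)
  -- integrability of f s / s on intervals away from 0
  have cont_int : ∀ (f : ℝ → ℝ), Continuous f → ∀ a b : ℝ, 1 ≤ a → 1 ≤ b →
      IntervalIntegrable (fun s => f s / s) volume a b := by
    intro f hf a b ha hb
    apply ContinuousOn.intervalIntegrable
    apply hf.continuousOn.div continuousOn_id
    intro x hx
    have h1 : (1:ℝ) ≤ x := le_trans (le_min ha hb) hx.1
    simp only [id_eq]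
    exact ne_of_gt (by linarith)
  set A : ℝ → ℝ := fun r => ∫ s in (0:ℝ)..r, ξ s / s with hA
  set B : ℝ → ℝ := fun r => ∫ s in (0:ℝ)..r, ξ' s / s with hB
  set C₁ : ℝ := ∫ s in (1:ℝ)..R, (1 - ξ s) / s with hC₁
  set K : ℝ := (B R - A R) - b * Real.log R + Real.log R + c - C₁ with hK
  have key : ∀ r, R ≤ r → B r - A r ≤ K + (b - 1) * Real.log r := by
    intro r hr
    have hr1 : (1:ℝ) ≤ r := le_trans hR1 hr
    have hrpos : (0:ℝ) < r := by linarith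
    have hRpos : (0:ℝ) < R := by linarith
    have hsplitB : B R + (∫ s in R..r, ξ' s / s) = B r :=
      integral_add_adjacent_intervals (hint' R hRpos) (cont_int ξ' hξ'c R r hR1 hr1)
    have hsplitA : A R + (∫ s in R..r, ξ s / s) = A r :=
      integral_add_adjacent_intervals (hint R hRpos) (cont_int ξ hξc R r hR1 hr1)
    have hlogint : (∫ s in R..r, 1 / s) = Real.log r - Real.log R := by
      rw [integral_one_div]
      · rw [Real.log_div (by linarith) (by linarith)]
      · intro hx
        have := hx.1
        simp only [min_def] at this
        split_ifs at this <;> linarith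
    -- bound on ξ' part
    have hbnd1 : (∫ s in R..r, ξ' s / s) ≤ b * Real.log r - b * Real.log R := by
      have : (∫ s in R..r, ξ' s / s) ≤ ∫ s in R..r, b / s := by
        apply integral_mono_on hr (cont_int ξ' hξ'c R r hR1 hr1)
          (cont_int (fun _ => b) continuous_const R r hR1 hr1)
        intro s hs
        have hspos : (0:ℝ) < s := lt_of_lt_of_le (by linarith : (0:ℝ) < R) hs.1
        exact div_le_div_of_nonneg_right (hRb s hs.1) hspos.le
      have heq : (∫ s in R..r, b / s) = b * (Real.log r - Real.log R) := by
        have : (∫ s in R..r, b / s) = b * ∫ s in R..r, 1 / s := by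
          rw [← intervalIntegral.integral_const_mul]
          congr 1; funext s; ring
        rw [this, hlogint]
      rw [heq] at this
      linarith [this]
    -- bound on ξ part (from below)
    have hbnd2 : Real.log r - Real.log R - (c - C₁) ≤ ∫ s in R..r, ξ s / s := by
      have hdecomp : (∫ s in R..r, ξ s / s)
          = (∫ s in R..r, 1 / s) - ∫ s in R..r, (1 - ξ s) / s := by
        rw [← integral_sub (cont_int (fun _ => 1) continuous_const R r hR1 hr1)
          (cont_int (fun s => 1 - ξ s) (continuous_const.sub hξc) R r hR1 hr1)]
        apply integral_congr
        intro s hs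
        have h1 : (1:ℝ) ≤ s := le_trans (le_min hR1 hr1) hs.1
        have : s ≠ 0 := by intro hs0; rw [hs0] at h1; linarith
        field_simp
        ring
      have hsplitC : C₁ + (∫ s in R..r, (1 - ξ s) / s) = ∫ s in (1:ℝ)..r, (1 - ξ s) / s :=
        integral_add_adjacent_intervals
          (cont_int (fun s => 1 - ξ s) (continuous_const.sub hξc) 1 R le_rfl hR1)
          (cont_int (fun s => 1 - ξ s) (continuous_const.sub hξc) R r hR1 hr1)
      have hcig := hcigar r hr1
      have : (∫ s in R..r, (1 - ξ s) / s) ≤ c - C₁ := by linarith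
      rw [hdecomp, hlogint]
      linarith
    have e : (b - 1) * Real.log r = b * Real.log r - Real.log r := by ring
    rw [hK]
    linarith
  -- the difference tends to -infinity
  have hG : Tendsto (fun r => B r - A r) atTop atBot := by
    have hg : Tendsto (fun r => K + (b - 1) * Real.log r) atTop atBot := by
      apply tendsto_atBot_add_const_left
      exact Tendsto.const_mul_atTop_of_neg (by linarith) Real.tendsto_log_atTop
    exact tendsto_atBot_mono' atTop
      (by filter_upwards [eventually_ge_atTop R] with r hr using key r hr) hg
  have heq : ∀ r, h r / h' r = (1 / h' 0) * Real.exp (B r - A r) := by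
    intro r
    rw [hh, hh', Real.exp_sub, Real.exp_neg, Real.exp_neg]
    have h1 : Real.exp (A r) ≠ 0 := Real.exp_ne_zero _
    have h2 : Real.exp (B r) ≠ 0 := Real.exp_ne_zero _
    field_simp
    ring
  have hTend : Tendsto (fun r => h r / h' r) atTop (nhds 0) := by
    have := (Real.tendsto_exp_atBot.comp hG).const_mul (1 / h' 0)
    rw [mul_zero] at this
    refine this.congr fun r => (heq r).symm
  refine ⟨hTend, ?_⟩
  rintro ⟨α, hα, hdom⟩
  have hev2 : ∀ᶠ r in atTop, h r / h' r < α := hTend.eventually_lt_const hα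
  rw [eventually_atTop] at hev2
  obtain ⟨N, hN⟩ := hev2
  set r := max N 0 with hr
  have hr0 : (0:ℝ) ≤ r := le_max_right _ _
  have hlt := hN r (le_max_left _ _)
  have hpr : 0 < h' r := by rw [hh']; positivity
  have := (le_div_iff₀ hpr).mpr (hdom r hr0)
  linarith
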